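/- Let v ∈ Z^n have pairwise distinct components, and let {Y_w^v : w ∈ S_n} be the associated Yang–Baxter basis of H_n. Set u = [v_n, v_{n−1}, …, v_1] and define Ŷ_w^v := T_ω · Y_{ωw}^u for w ∈ S_n, where ω is the permutation of maximal length in S_n. Then {Ŷ_w^v} is the adjoint basis of {Y_w^v} with respect to the scalar product: (Y_w^v, Ŷ_{w'}^v) = δ_{w,w'} for all w, w' ∈ S_n. -/

import Mathlib

open scoped BigOperators
open Finset

namespace HeckePaper

noncomputable section

/-- The Coxeter length of a permutation of `Fin n`, i.e. its number of inversions. -/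
def len {n : ℕ} (w : Equiv.Perm (Fin n)) : ℕ :=
  (Finset.univ.filter fun p : Fin n × Fin n => p.1 < p.2 ∧ w p.2 < w p.1).card

/-- The adjacent transposition exchanging `i` and `i+1` (`0`-based), i.e. the
Coxeter generator `s_{i+1} = T_{i+1}` in the (1-based) notation of the paper;
defined to be `1` when out of range. -/
def adj (n i : ℕ) : Equiv.Perm (Fin n) :=
  if h : i + 1 < n then Equiv.swap ⟨i, by omega⟩ ⟨i + 1, h⟩ else 1

/-- The q-integer `[k] = (q^k - q^{-k})/(q - q⁻¹) = q^{k-1} + q^{k-3} + ⋯ + q^{1-k}`. -/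
def qint {R : Type} [CommRing R] (q : Rˣ) (k : ℤ) : R :=
  if 0 ≤ k then ∑ j ∈ Finset.range k.toNat, ((q ^ (k - 1 - 2 * (j : ℤ)) : Rˣ) : R)
  else - ∑ j ∈ Finset.range (-k).toNat, ((q ^ (-k - 1 - 2 * (j : ℤ)) : Rˣ) : R)

/-- `Q = q - q⁻¹`. -/
def Qv (R : Type) [CommRing R] (q : Rˣ) : R := (q : R) - ((q⁻¹ : Rˣ) : R)

/-- A realization of the Hecke algebra `H_n` of the symmetric group `S_n` over `R`:
an `R`-algebra `H` with a basis `{T_w : w ∈ S_n}` such that `T_u T_v = T_{uv}`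
whenever lengths add, and the Hecke quadratic relations
`T_i² = (q - q⁻¹) T_i + 1` hold for the generators. -/
structure HeckeAlgebra (n : ℕ) (R : Type) [CommRing R] (q : Rˣ) (H : Type)
    [Ring H] [Algebra R H] where
  T : Equiv.Perm (Fin n) → H
  basis : Module.Basis (Equiv.Perm (Fin n)) R H
  basis_eq : ∀ w, basis w = T w
  T_one : T 1 = 1
  T_mul : ∀ u v : Equiv.Perm (Fin n), len (u * v) = len u + len v →
    T u * T v = T (u * v)
  T_sq : ∀ i : ℕ, i + 1 < n →
    T (adj n i) * T (adj n i) = Qv R q • T (adj n i) + 1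

/-- The Young subgroup `S_I` of `S_n` associated with a composition `I` of `n`:
permutations preserving each block of the composition. -/
def youngSubgroup {n : ℕ} (c : Composition n) : Subgroup (Equiv.Perm (Fin n)) where
  carrier := {w | ∀ i, c.index (w i) = c.index i}
  one_mem' := fun _ => rfl
  mul_mem' := by
    intro a b ha hb i
    have hb' := hb i
    have ha' := ha (b i)
    simpa [Equiv.Perm.mul_apply, hb'] using ha'
  inv_mem' := by
    intro a ha i
    have := ha (a⁻¹ i)
    simpa using this.symm

/-- `w` is the minimal-length representative of its coset `w·S_I`. -/
def IsMinCosetRep {n : ℕ} (c : Composition n) (w : Equiv.Perm (Fin n)) : Prop :=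
  ∀ u ∈ youngSubgroup c, len w ≤ len (w * u)

/-- `w` is of maximal length in its coset `w·S_I`. -/
def IsMaxCosetRep {n : ℕ} (c : Composition n) (w : Equiv.Perm (Fin n)) : Prop :=
  ∀ u ∈ youngSubgroup c, len (w * u) ≤ len w

/-- The set of minimal-length representatives of the cosets `S_n/S_I`. -/
def minCosetReps {n : ℕ} (c : Composition n) : Finset (Equiv.Perm (Fin n)) :=
  @Finset.filter _ (IsMinCosetRep c) (Classical.decPred _) Finset.univ

/-- The word `[a+m-2, …, a+1, a]` (so that the corresponding product of adjacent
transpositions is the block cyclic permutation `ζ_m` shifted by `a`). -/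
def zetaWordBlock (a m : ℕ) : List ℕ := (List.range (m - 1)).reverse.map (a + ·)

/-- The reduced word of the permutation `w_J` (whose Hecke element is `ζ_J`),
for a composition `J` of `n`. -/
def zetaWord {n : ℕ} (c : Composition n) : List ℕ :=
  (List.ofFn fun k : Fin c.length =>
    zetaWordBlock (c.sizeUpTo k) (c.blocksFun k)).flatten

/-- The permutation `w_J`, a minimal-length representative of the conjugacy
class corresponding to the composition `J`; `ζ_J = T_{w_J}`. -/
def zetaPerm {n : ℕ} (c : Composition n) : Equiv.Perm (Fin n) :=
  ((zetaWord c).map (adj n)).prod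

/-- The composition of `n` obtained by sorting the parts of a partition of `n`
in decreasing order. -/
def partComp {n : ℕ} (μ : n.Partition) : Composition n where
  blocks := μ.parts.sort (· ≥ ·)
  blocks_pos := by
    intro i hi
    exact μ.parts_pos (by rwa [Multiset.mem_sort] at hi)
  blocks_sum := by
    have h : ((μ.parts.sort (· ≥ ·) : List ℕ) : Multiset ℕ) = μ.parts :=
      Multiset.sort_eq _ _
    calc (μ.parts.sort (· ≥ ·)).sum
        = ((μ.parts.sort (· ≥ ·) : List ℕ) : Multiset ℕ).sum := by
          rw [Multiset.sum_coe]
      _ = μ.parts.sum := by rw [h]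
      _ = n := μ.parts_sum

/-- `m` is a partial sum `j_1 + ⋯ + j_k` of the composition `J`. -/
def IsPartialSum {n : ℕ} (c : Composition n) (m : ℕ) : Prop :=
  ∃ k ≤ c.length, c.sizeUpTo k = m

/-- `w` has a recoil at `a` (0-based; i.e. at `i = a+1` in the 1-based notation of
the paper): the value `a+1` occurs to the left of the value `a` in the one-line
word of `w`. -/
def Recoil {n : ℕ} (w : Equiv.Perm (Fin n)) (a : ℕ) : Prop :=
  ∀ h : a + 1 < n, w⁻¹ ⟨a + 1, h⟩ < w⁻¹ ⟨a, by omega⟩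

namespace HeckeAlgebra

variable {n : ℕ} {R : Type} [CommRing R] {q : Rˣ} {H : Type} [Ring H] [Algebra R H]
variable (𝒜 : HeckeAlgebra n R q H)

/-- The scalar product on `H_n` for which the basis `{T_w}` is orthonormal. -/
def scalar (x y : H) : R :=
  ∑ w : Equiv.Perm (Fin n), 𝒜.basis.repr x w * 𝒜.basis.repr y w

/-- The normalization map `N_I : H(S_I) → H_n`,
`h ↦ Σ_w T_w h T_{w⁻¹}` (sum over the minimal-length coset representatives of
`S_n/S_I`). -/
def norm (c : Composition n) (h : H) : H :=
  ∑ w ∈ minCosetReps c, 𝒜.T w * h * 𝒜.T w⁻¹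

/-- The product `T_{a_1} T_{a_2} ⋯` in the Hecke algebra associated with a word
(list of 0-based indices of the generators). -/
def wordT (l : List ℕ) : H := (l.map fun a => 𝒜.T (adj n a)).prod

/-- The Hecke element `ζ_J = T_{w_J}` of a composition `J`. -/
def zeta (c : Composition n) : H := 𝒜.T (zetaPerm c)

end HeckeAlgebra


/-- The family `{Y_w}` is the Yang–Baxter family associated with the spectral
vector `v` (the scalars `q^k/[k]` being expressed using a chosen system `inv`
of inverses of the q-integers): `Y_1 = 1` and
`Y_{w·sᵢ} = Y_w · (T_i − q^k/[k])` whenever `ℓ(w·sᵢ) = ℓ(w) + 1`, where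
`k = v_{w(i+1)} − v_{w(i)}`. -/
def IsYangBaxterFamily {n : ℕ} {R : Type} [CommRing R] {q : Rˣ} {H : Type}
    [Ring H] [Algebra R H] (𝒜 : HeckeAlgebra n R q H)
    (v : Fin n → ℤ) (inv : ℤ → R) (Y : Equiv.Perm (Fin n) → H) : Prop :=
  Y 1 = 1 ∧
  ∀ (w : Equiv.Perm (Fin n)) (i : ℕ) (h : i + 1 < n),
    len (w * adj n i) = len w + 1 →
    Y (w * adj n i) = Y w * (𝒜.T (adj n i) -
      algebraMap R H
        (((q ^ (v (w ⟨i + 1, h⟩) - v (w ⟨i, by omega⟩)) : Rˣ) : R) *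
          inv (v (w ⟨i + 1, h⟩) - v (w ⟨i, by omega⟩))))

section Comb
variable {n : ℕ}

lemma adj_eq {i : ℕ} (h : i + 1 < n) :
    adj n i = Equiv.swap ⟨i, by omega⟩ ⟨i + 1, h⟩ := by
  simp [adj, h]

lemma adj_mul_self {i : ℕ} : adj n i * adj n i = 1 := by
  unfold adj; split
  · exact Equiv.swap_mul_self _ _
  · simp

lemma swap_lt_swap {a b p q : Fin n} (hab : (a : ℕ) + 1 = (b : ℕ))
    (hpq : p < q) (hne : ¬(p = a ∧ q = b)) : Equiv.swap a b p < Equiv.swap a b q := by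
  have hne' : ∀ x y : Fin n, x ≠ y → (x : ℕ) ≠ (y : ℕ) := fun x y hx h => hx (Fin.ext h)
  rw [Fin.lt_def] at hpq
  rcases eq_or_ne p a with rfl | hpa
  · have hqb : q ≠ b := fun h => hne ⟨rfl, h⟩
    have hqa : q ≠ p := fun h => absurd hpq (by rw [h]; omega)
    rw [Equiv.swap_apply_left, Equiv.swap_apply_of_ne_of_ne hqa hqb]
    have := hne' _ _ hqb
    rw [Fin.lt_def]; omega
  · rcases eq_or_ne p b with rfl | hpb
    · have hqa : q ≠ a := fun h => by
        subst h; have := hne' _ _ hpa; omega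
      have hqb : q ≠ p := fun h => absurd hpq (by rw [h]; omega)
      rw [Equiv.swap_apply_right, Equiv.swap_apply_of_ne_of_ne hqa hqb]
      have := hne' _ _ hqa
      rw [Fin.lt_def]; omega
    · rcases eq_or_ne q a with rfl | hqa
      · rw [Equiv.swap_apply_left, Equiv.swap_apply_of_ne_of_ne hpa hpb]
        rw [Fin.lt_def]; omega
      · rcases eq_or_ne q b with rfl | hqb
        · have := hne' _ _ hpa
          rw [Equiv.swap_apply_right, Equiv.swap_apply_of_ne_of_ne hpa hpb]
          rw [Fin.lt_def]; omega
        · rw [Equiv.swap_apply_of_ne_of_ne hpa hpb, Equiv.swap_apply_of_ne_of_ne hqa hqb]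
          rw [Fin.lt_def]; omega

lemma len_mul_adj (w : Equiv.Perm (Fin n)) {i : ℕ} (h : i + 1 < n) :
    (w ⟨i, by omega⟩ < w ⟨i + 1, h⟩ ∧ len (w * adj n i) = len w + 1) ∨
    (w ⟨i + 1, h⟩ < w ⟨i, by omega⟩ ∧ len w = len (w * adj n i) + 1) := by
  set a : Fin n := ⟨i, by omega⟩ with ha
  set b : Fin n := ⟨i + 1, h⟩ with hb
  have hab : a < b := by simp [ha, hb, Fin.lt_def]
  have hab' : (a : ℕ) + 1 = (b : ℕ) := rfl
  have hadj : adj n i = Equiv.swap a b := adj_eq h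
  set L : Finset (Fin n × Fin n) :=
    Finset.univ.filter (fun p : Fin n × Fin n =>
      p.1 < p.2 ∧ w (Equiv.swap a b p.2) < w (Equiv.swap a b p.1)) with hL
  set Rf : Finset (Fin n × Fin n) :=
    Finset.univ.filter (fun p : Fin n × Fin n => p.1 < p.2 ∧ w p.2 < w p.1) with hR
  have hlenws : len (w * adj n i) = L.card := by
    rw [hadj]
    simp only [len, hL, Equiv.Perm.mul_apply]
    rfl
  have hlenw : len w = Rf.card := rfl
  have hback : ∀ p : Fin n × Fin n, p.1 < p.2 →
      Equiv.swap a b p.1 = a → Equiv.swap a b p.2 = b → False := by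
    intro p hplt h1 h2
    have e1 := congrArg (Equiv.swap a b) h1
    rw [Equiv.swap_apply_self, Equiv.swap_apply_left] at e1
    have e2 := congrArg (Equiv.swap a b) h2
    rw [Equiv.swap_apply_self, Equiv.swap_apply_right] at e2
    rw [e1, e2] at hplt
    exact absurd (hab.trans hplt) (lt_irrefl _)
  have hkey : (L.erase (a, b)).card = (Rf.erase (a, b)).card := by
    apply Finset.card_bij'
      (fun p _ => (Equiv.swap a b p.1, Equiv.swap a b p.2))
      (fun p _ => (Equiv.swap a b p.1, Equiv.swap a b p.2))
    · intro p hp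
      rw [Finset.mem_erase, hL, Finset.mem_filter] at hp
      obtain ⟨hpe, -, hp1, hp2⟩ := hp
      have hlt : Equiv.swap a b p.1 < Equiv.swap a b p.2 :=
        swap_lt_swap hab' hp1 (fun ⟨h1, h2⟩ => hpe (by rw [← h1, ← h2]))
      rw [Finset.mem_erase, hR, Finset.mem_filter]
      exact ⟨fun he => hback p hp1 (congrArg Prod.fst he) (congrArg Prod.snd he),
        Finset.mem_univ _, hlt, hp2⟩
    · intro p hp
      rw [Finset.mem_erase, hR, Finset.mem_filter] at hp
      obtain ⟨hpe, -, hp1, hp2⟩ := hp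
      have hlt : Equiv.swap a b p.1 < Equiv.swap a b p.2 :=
        swap_lt_swap hab' hp1 (fun ⟨h1, h2⟩ => hpe (by rw [← h1, ← h2]))
      rw [Finset.mem_erase, hL, Finset.mem_filter]
      refine ⟨fun he => hback p hp1 (congrArg Prod.fst he) (congrArg Prod.snd he),
        Finset.mem_univ _, hlt, ?_⟩
      rw [Equiv.swap_apply_self, Equiv.swap_apply_self]
      exact hp2
    · intro p _; rw [Equiv.swap_apply_self, Equiv.swap_apply_self]
    · intro p _; rw [Equiv.swap_apply_self, Equiv.swap_apply_self]
  have hmemL : (a, b) ∈ L ↔ w a < w b := by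
    rw [hL, Finset.mem_filter]
    constructor
    · rintro ⟨-, -, h2⟩
      rwa [Equiv.swap_apply_left, Equiv.swap_apply_right] at h2
    · intro hlt
      refine ⟨Finset.mem_univ _, hab, ?_⟩
      rwa [Equiv.swap_apply_left, Equiv.swap_apply_right]
  have hmemR : (a, b) ∈ Rf ↔ w b < w a := by
    rw [hR, Finset.mem_filter]
    constructor
    · rintro ⟨-, -, h2⟩; exact h2
    · intro hlt; exact ⟨Finset.mem_univ _, hab, hlt⟩
  have hne : w a ≠ w b := fun he => absurd (w.injective he) (by simp [ha, hb, Fin.ext_iff])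
  rcases hne.lt_or_gt with hlt | hlt
  · left
    refine ⟨hlt, ?_⟩
    have h1 : (a, b) ∈ L := hmemL.2 hlt
    have h2 : (a, b) ∉ Rf := fun hm => absurd (hlt.trans (hmemR.1 hm)) (lt_irrefl _)
    have e1 : (L.erase (a, b)).card + 1 = L.card := Finset.card_erase_add_one h1
    have e2 : Rf.erase (a, b) = Rf := Finset.erase_eq_of_notMem h2
    rw [hlenws, hlenw, ← e1, hkey, e2]
  · right
    refine ⟨hlt, ?_⟩
    have h1 : (a, b) ∉ L := fun hm => absurd (hlt.trans (hmemL.1 hm)) (lt_irrefl _)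
    have h2 : (a, b) ∈ Rf := hmemR.2 hlt
    have e1 : L.erase (a, b) = L := Finset.erase_eq_of_notMem h1
    have e2 : (Rf.erase (a, b)).card + 1 = Rf.card := Finset.card_erase_add_one h2
    rw [hlenws, hlenw, ← e2, ← hkey, e1]

end Comb
section Comb2
variable {n : ℕ}

lemma len_one : len (1 : Equiv.Perm (Fin n)) = 0 := by
  simp only [len, Equiv.Perm.one_apply, Finset.card_eq_zero]
  refine Finset.filter_false_of_mem ?_
  rintro p - ⟨h1, h2⟩
  exact absurd (h1.trans h2) (lt_irrefl _)

lemma exists_descent (w : Equiv.Perm (Fin n)) (hw : w ≠ 1) :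
    ∃ i : ℕ, ∃ h : i + 1 < n, w ⟨i + 1, h⟩ < w ⟨i, by omega⟩ := by
  by_contra hc
  push_neg at hc
  apply hw
  have hmono : StrictMono (w : Fin n → Fin n) := by
    rcases n with - | m
    · intro x; exact absurd x.2 (by omega)
    · rw [Fin.strictMono_iff_lt_succ]
      intro j
      have h : (j : ℕ) + 1 < m + 1 := by omega
      have hj := hc j h
      have he1 : (Fin.castSucc j) = (⟨(j : ℕ), by omega⟩ : Fin (m + 1)) := rfl
      have he2 : (Fin.succ j) = (⟨(j : ℕ) + 1, h⟩ : Fin (m + 1)) := rfl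
      rw [he1, he2]
      refine lt_of_le_of_ne hj ?_
      intro he
      have := w.injective he
      simp [Fin.ext_iff] at this
  have hid : (w : Fin n → Fin n) = id := by
    haveI : WellFoundedLT (Fin n) := Finite.to_wellFoundedLT
    apply (StrictMono.range_inj hmono strictMono_id).1
    rw [Set.range_id]
    exact Set.range_eq_univ.2 w.surjective
  ext x
  rw [show w x = id x from congrFun hid x]; rfl

lemma len_pos_of_ne_one {w : Equiv.Perm (Fin n)} (hw : w ≠ 1) : 0 < len w := by
  obtain ⟨i, h, hd⟩ := exists_descent w hw
  rw [len, Finset.card_pos]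
  exact ⟨(⟨i, by omega⟩, ⟨i + 1, h⟩), Finset.mem_filter.2
    ⟨Finset.mem_univ _, by simp [Fin.lt_def], hd⟩⟩

lemma eq_one_of_len_eq_zero {w : Equiv.Perm (Fin n)} (hw : len w = 0) : w = 1 := by
  by_contra hc
  have := len_pos_of_ne_one hc
  omega

lemma len_inv (w : Equiv.Perm (Fin n)) : len w⁻¹ = len w := by
  apply Finset.card_bij'
    (fun p _ => (w⁻¹ p.2, w⁻¹ p.1))
    (fun p _ => (w p.2, w p.1))
  · intro p hp
    rw [Finset.mem_filter] at hp ⊢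
    obtain ⟨-, h1, h2⟩ := hp
    exact ⟨Finset.mem_univ _, h2, by simpa using h1⟩
  · intro p hp
    rw [Finset.mem_filter] at hp ⊢
    obtain ⟨-, h1, h2⟩ := hp
    exact ⟨Finset.mem_univ _, h2, by simpa using h1⟩
  · intro p _; simp
  · intro p _; simp

lemma len_revPerm_mul (x : Equiv.Perm (Fin n)) :
    len (Fin.revPerm * x) + len x = len (Fin.revPerm : Equiv.Perm (Fin n)) := by
  have key : ∀ y : Equiv.Perm (Fin n), len (Fin.revPerm * y) + len y =
      (Finset.univ.filter fun p : Fin n × Fin n => p.1 < p.2).card := by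
    intro y
    have h1 : len (Fin.revPerm * y) =
        ((Finset.univ.filter fun p : Fin n × Fin n => p.1 < p.2).filter
          (fun p => ¬ (y p.2 < y p.1))).card := by
      rw [len, Finset.filter_filter]
      congr 1
      apply Finset.filter_congr
      intro p _
      constructor
      · rintro ⟨h1, h2⟩
        simp only [Equiv.Perm.mul_apply, Fin.revPerm_apply, Fin.rev_lt_rev] at h2
        exact ⟨h1, fun hc => absurd (h2.trans hc) (lt_irrefl _)⟩
      · rintro ⟨h1, h2⟩
        refine ⟨h1, ?_⟩
        simp only [Equiv.Perm.mul_apply, Fin.revPerm_apply, Fin.rev_lt_rev]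
        rcases lt_trichotomy (y p.1) (y p.2) with h | h | h
        · exact h
        · exact absurd (y.injective h) (fun he => absurd h1 (by rw [he]; exact lt_irrefl _))
        · exact absurd h h2
    have h2 : len y =
        ((Finset.univ.filter fun p : Fin n × Fin n => p.1 < p.2).filter
          (fun p => y p.2 < y p.1)).card := by
      rw [len, Finset.filter_filter]
    rw [h1, h2, Nat.add_comm]
    exact Finset.card_filter_add_card_filter_not _
  have h0 := key 1
  rw [mul_one, len_one, Nat.add_zero] at h0
  rw [key x, h0]

lemma revPerm_mul_self : (Fin.revPerm * Fin.revPerm : Equiv.Perm (Fin n)) = 1 := by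
  ext p
  simp [Fin.rev_rev]

lemma len_le_revPerm (x : Equiv.Perm (Fin n)) :
    len x ≤ len (Fin.revPerm : Equiv.Perm (Fin n)) := by
  have h := len_revPerm_mul (Fin.revPerm * x)
  rw [← mul_assoc, revPerm_mul_self, one_mul] at h
  omega

lemma revPerm_inv : (Fin.revPerm : Equiv.Perm (Fin n))⁻¹ = Fin.revPerm := by
  ext p
  simp [Equiv.Perm.inv_def]

end Comb2

section QintLemmas
variable {R : Type} [CommRing R] (q : Rˣ)

lemma qv_mul_sum (m : ℕ) :
    Qv R q * (∑ j ∈ Finset.range m, ((q ^ ((m : ℤ) - 1 - 2 * (j : ℤ)) : Rˣ) : R)) =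
      ((q ^ (m : ℤ) : Rˣ) : R) - ((q ^ (-(m : ℤ)) : Rˣ) : R) := by
  induction m with
  | zero => simp [Qv]
  | succ m ih =>
    rw [show ((m + 1 : ℕ) : ℤ) = (m : ℤ) + 1 by push_cast; ring]
    have hstep : (∑ j ∈ Finset.range (m + 1),
        ((q ^ (((m : ℤ) + 1) - 1 - 2 * (j : ℤ)) : Rˣ) : R)) =
        ((q ^ (m : ℤ) : Rˣ) : R) +
          ((q⁻¹ : Rˣ) : R) * ∑ j ∈ Finset.range m, ((q ^ ((m : ℤ) - 1 - 2 * (j : ℤ)) : Rˣ) : R) := by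
      rw [Finset.sum_range_succ', add_comm]
      congr 1
      · norm_num
      · rw [Finset.mul_sum]
        apply Finset.sum_congr rfl
        intro j _
        have he : ((m : ℤ) + 1) - 1 - 2 * (((j + 1 : ℕ) : ℕ) : ℤ)
            = (-1) + ((m : ℤ) - 1 - 2 * (j : ℤ)) := by push_cast; ring
        rw [he, zpow_add, zpow_neg_one, Units.val_mul]
    rw [hstep, mul_add, mul_left_comm, ih]
    have e1 : ((q ^ ((m : ℤ) + 1) : Rˣ) : R) = (q : R) * ((q ^ (m : ℤ) : Rˣ) : R) := by
      rw [add_comm, zpow_add, zpow_one, Units.val_mul]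
    have e2 : ((q ^ (-((m : ℤ) + 1)) : Rˣ) : R) = ((q⁻¹ : Rˣ) : R) * ((q ^ (-(m : ℤ)) : Rˣ) : R) := by
      rw [show -((m : ℤ) + 1) = (-1) + (-(m : ℤ)) by ring, zpow_add, zpow_neg_one, Units.val_mul]
    rw [e1, e2, Qv]
    ring

lemma qv_mul_qint (k : ℤ) :
    Qv R q * qint q k = ((q ^ k : Rˣ) : R) - ((q ^ (-k) : Rˣ) : R) := by
  rcases le_or_gt 0 k with hk | hk
  · rw [qint, if_pos hk]
    have hm : k = ((k.toNat : ℕ) : ℤ) := by omega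
    rw [show ((q ^ k : Rˣ) : R) - ((q ^ (-k) : Rˣ) : R) =
        ((q ^ ((k.toNat : ℕ) : ℤ) : Rˣ) : R) - ((q ^ (-((k.toNat : ℕ) : ℤ)) : Rˣ) : R) by rw [← hm]]
    rw [← qv_mul_sum q k.toNat]
    congr 1
    apply Finset.sum_congr rfl
    intro j _
    rw [← hm]
  · rw [qint, if_neg (by omega)]
    have hm : -k = (((-k).toNat : ℕ) : ℤ) := by omega
    have hs := qv_mul_sum q (-k).toNat
    rw [mul_neg]
    rw [show (∑ j ∈ Finset.range (-k).toNat, ((q ^ (-k - 1 - 2 * (j : ℤ)) : Rˣ) : R)) =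
        ∑ j ∈ Finset.range (-k).toNat,
          ((q ^ ((((-k).toNat : ℕ) : ℤ) - 1 - 2 * (j : ℤ)) : Rˣ) : R) by
      apply Finset.sum_congr rfl; intro j _; rw [← hm]]
    rw [hs, ← hm]
    rw [show -(-k) = k from neg_neg k]
    ring

lemma qint_neg (k : ℤ) : qint (R := R) q (-k) = - qint q k := by
  rcases lt_trichotomy k 0 with hk | rfl | hk
  · simp only [qint, if_pos (show (0:ℤ) ≤ -k by omega), if_neg (show ¬ (0:ℤ) ≤ k by omega),
      neg_neg]
  · simp [qint]
  · simp only [qint, if_neg (show ¬ (0:ℤ) ≤ -k by omega), if_pos (show (0:ℤ) ≤ k by omega),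
      neg_neg]

end QintLemmas


section HeckeLemmas
variable {n : ℕ} {R : Type} [CommRing R] {q : Rˣ} {H : Type} [Ring H] [Algebra R H]
variable (𝒜 : HeckeAlgebra n R q H)

lemma adj_inv {i : ℕ} : (adj n i : Equiv.Perm (Fin n))⁻¹ = adj n i :=
  inv_eq_of_mul_eq_one_left adj_mul_self

lemma len_adj {i : ℕ} (h : i + 1 < n) : len (adj n i : Equiv.Perm (Fin n)) = 1 := by
  rcases len_mul_adj (1 : Equiv.Perm (Fin n)) h with ⟨-, he⟩ | ⟨hlt, -⟩
  · rw [one_mul] at he; rw [he, len_one]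
  · simp only [Equiv.Perm.one_apply, Fin.lt_def] at hlt; omega

lemma len_adj_mul (u : Equiv.Perm (Fin n)) {i : ℕ} (h : i + 1 < n) :
    len (adj n i * u) = len u + 1 ∨ len u = len (adj n i * u) + 1 := by
  have e : (adj n i * u)⁻¹ = u⁻¹ * adj n i := by rw [mul_inv_rev, adj_inv]
  have e2 : len (adj n i * u) = len (u⁻¹ * adj n i) := by rw [← len_inv, e]
  rcases len_mul_adj u⁻¹ h with ⟨-, hl⟩ | ⟨-, hl⟩
  · left; rw [e2, hl, len_inv]
  · right; rw [e2, ← hl, len_inv]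

lemma mul_algebraMap' (x : H) (c : R) : x * algebraMap R H c = c • x := by
  rw [Algebra.algebraMap_eq_smul_one, mul_smul_comm, mul_one]

lemma T_mul_adj_up {i : ℕ} (h : i + 1 < n) (w : Equiv.Perm (Fin n))
    (hl : len (w * adj n i) = len w + 1) :
    𝒜.T w * 𝒜.T (adj n i) = 𝒜.T (w * adj n i) :=
  𝒜.T_mul _ _ (by rw [hl, len_adj h])

lemma T_mul_adj_down {i : ℕ} (h : i + 1 < n) (w : Equiv.Perm (Fin n))
    (hl : len w = len (w * adj n i) + 1) :
    𝒜.T w * 𝒜.T (adj n i) = 𝒜.T (w * adj n i) + Qv R q • 𝒜.T w := by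
  have hww : w * adj n i * adj n i = w := by rw [mul_assoc, adj_mul_self, mul_one]
  have hup : len (w * adj n i * adj n i) = len (w * adj n i) + 1 := by rw [hww]; omega
  have h1 : 𝒜.T (w * adj n i) * 𝒜.T (adj n i) = 𝒜.T w := by
    rw [T_mul_adj_up 𝒜 h _ hup, hww]
  calc 𝒜.T w * 𝒜.T (adj n i) = 𝒜.T (w * adj n i) * (𝒜.T (adj n i) * 𝒜.T (adj n i)) := by
        rw [← mul_assoc, h1]
    _ = 𝒜.T (w * adj n i) * (Qv R q • 𝒜.T (adj n i) + 1) := by rw [𝒜.T_sq i h]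
    _ = Qv R q • (𝒜.T (w * adj n i) * 𝒜.T (adj n i)) + 𝒜.T (w * adj n i) := by
        rw [mul_add, mul_one, mul_smul_comm]
    _ = 𝒜.T (w * adj n i) + Qv R q • 𝒜.T w := by rw [h1, add_comm]

lemma T_adj_mul_up {i : ℕ} (h : i + 1 < n) (u : Equiv.Perm (Fin n))
    (hl : len (adj n i * u) = len u + 1) :
    𝒜.T (adj n i) * 𝒜.T u = 𝒜.T (adj n i * u) :=
  𝒜.T_mul _ _ (by rw [hl, len_adj h, Nat.add_comm])

lemma T_adj_mul_down {i : ℕ} (h : i + 1 < n) (u : Equiv.Perm (Fin n))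
    (hl : len u = len (adj n i * u) + 1) :
    𝒜.T (adj n i) * 𝒜.T u = 𝒜.T (adj n i * u) + Qv R q • 𝒜.T u := by
  have huu : adj n i * (adj n i * u) = u := by rw [← mul_assoc, adj_mul_self, one_mul]
  have hup : len (adj n i * (adj n i * u)) = len (adj n i * u) + 1 := by rw [huu]; omega
  have h1 : 𝒜.T (adj n i) * 𝒜.T (adj n i * u) = 𝒜.T u := by
    rw [T_adj_mul_up 𝒜 h _ hup, huu]
  calc 𝒜.T (adj n i) * 𝒜.T u = (𝒜.T (adj n i) * 𝒜.T (adj n i)) * 𝒜.T (adj n i * u) := by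
        rw [mul_assoc, h1]
    _ = (Qv R q • 𝒜.T (adj n i) + 1) * 𝒜.T (adj n i * u) := by rw [𝒜.T_sq i h]
    _ = Qv R q • (𝒜.T (adj n i) * 𝒜.T (adj n i * u)) + 𝒜.T (adj n i * u) := by
        rw [add_mul, one_mul, smul_mul_assoc]
    _ = 𝒜.T (adj n i * u) + Qv R q • 𝒜.T u := by rw [h1, add_comm]

lemma repr_T (w : Equiv.Perm (Fin n)) :
    𝒜.basis.repr (𝒜.T w) = Finsupp.single w 1 := by
  rw [← 𝒜.basis_eq]; exact 𝒜.basis.repr_self w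

lemma scalar_T_T (u v : Equiv.Perm (Fin n)) :
    𝒜.scalar (𝒜.T u) (𝒜.T v) = if u = v then 1 else 0 := by
  classical
  simp only [HeckeAlgebra.scalar, repr_T, Finsupp.single_apply]
  by_cases h : u = v
  · subst h; simp
  · rw [if_neg h]
    apply Finset.sum_eq_zero
    intro w _
    rcases eq_or_ne u w with rfl | h1
    · rw [if_neg (show ¬ v = u from fun hc => h hc.symm), mul_zero]
    · rw [if_neg h1, zero_mul]

lemma scalar_comm (x y : H) : 𝒜.scalar x y = 𝒜.scalar y x := by
  simp [HeckeAlgebra.scalar, mul_comm]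

lemma scalar_add_left (x y z : H) :
    𝒜.scalar (x + y) z = 𝒜.scalar x z + 𝒜.scalar y z := by
  simp [HeckeAlgebra.scalar, map_add, Finsupp.add_apply, add_mul, Finset.sum_add_distrib]

lemma scalar_add_right (x y z : H) :
    𝒜.scalar x (y + z) = 𝒜.scalar x y + 𝒜.scalar x z := by
  simp [HeckeAlgebra.scalar, map_add, Finsupp.add_apply, mul_add, Finset.sum_add_distrib]

lemma scalar_sub_left (x y z : H) :
    𝒜.scalar (x - y) z = 𝒜.scalar x z - 𝒜.scalar y z := by
  simp [HeckeAlgebra.scalar, map_sub, Finsupp.sub_apply, sub_mul, Finset.sum_sub_distrib]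

lemma scalar_sub_right (x y z : H) :
    𝒜.scalar x (y - z) = 𝒜.scalar x y - 𝒜.scalar x z := by
  simp [HeckeAlgebra.scalar, map_sub, Finsupp.sub_apply, mul_sub, Finset.sum_sub_distrib]

lemma scalar_smul_left (c : R) (x z : H) :
    𝒜.scalar (c • x) z = c * 𝒜.scalar x z := by
  simp [HeckeAlgebra.scalar, map_smul, Finsupp.smul_apply, smul_eq_mul, Finset.mul_sum, mul_assoc]

lemma scalar_smul_right (c : R) (x z : H) :
    𝒜.scalar x (c • z) = c * 𝒜.scalar x z := by
  simp only [HeckeAlgebra.scalar, map_smul, Finsupp.smul_apply, smul_eq_mul, Finset.mul_sum]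
  apply Finset.sum_congr rfl
  intro w _
  ring

lemma scalar_sum_left {ι : Type} (s : Finset ι) (f : ι → H) (z : H) :
    𝒜.scalar (∑ i ∈ s, f i) z = ∑ i ∈ s, 𝒜.scalar (f i) z := by
  simp only [HeckeAlgebra.scalar, map_sum, Finset.sum_apply', Finset.sum_mul]
  rw [Finset.sum_comm]

lemma scalar_sum_right {ι : Type} (s : Finset ι) (f : ι → H) (z : H) :
    𝒜.scalar z (∑ i ∈ s, f i) = ∑ i ∈ s, 𝒜.scalar z (f i) := by
  simp only [HeckeAlgebra.scalar, map_sum, Finset.sum_apply', Finset.mul_sum]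
  rw [Finset.sum_comm]

lemma scalar_mulalg_right (x y : H) (c : R) :
    𝒜.scalar x (y * algebraMap R H c) = c * 𝒜.scalar x y := by
  rw [mul_algebraMap', scalar_smul_right]

lemma scalar_T_right (x : H) (v : Equiv.Perm (Fin n)) :
    𝒜.scalar x (𝒜.T v) = 𝒜.basis.repr x v := by
  classical
  simp only [HeckeAlgebra.scalar, repr_T, Finsupp.single_apply]
  rw [Finset.sum_eq_single v]
  · simp
  · intro w _ hw; rw [if_neg (fun hc => hw hc.symm), mul_zero]
  · intro hv; exact absurd (Finset.mem_univ v) hv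

end HeckeLemmas



section AdjointLemmas
variable {n : ℕ} {R : Type} [CommRing R] {q : Rˣ} {H : Type} [Ring H] [Algebra R H]
variable (𝒜 : HeckeAlgebra n R q H)

lemma mul_adj_cancel {i : ℕ} (a b : Equiv.Perm (Fin n)) :
    a * adj n i = b ↔ a = b * adj n i := by
  constructor
  · rintro rfl; rw [mul_assoc, adj_mul_self, mul_one]
  · rintro rfl; rw [mul_assoc, adj_mul_self, mul_one]

lemma scalar_T_adj_T {i : ℕ} (h : i + 1 < n) (u v : Equiv.Perm (Fin n)) :
    𝒜.scalar (𝒜.T u * 𝒜.T (adj n i)) (𝒜.T v) =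
      𝒜.scalar (𝒜.T u) (𝒜.T v * 𝒜.T (adj n i)) := by
  classical
  rcases len_mul_adj u h with ⟨-, hu⟩ | ⟨-, hu⟩ <;> rcases len_mul_adj v h with ⟨-, hv⟩ | ⟨-, hv⟩
  · rw [T_mul_adj_up 𝒜 h u hu, T_mul_adj_up 𝒜 h v hv]
    simp only [scalar_T_T]
    exact if_congr (mul_adj_cancel u v) rfl rfl
  · rw [T_mul_adj_up 𝒜 h u hu, T_mul_adj_down 𝒜 h v hv, scalar_add_right,
      scalar_smul_right]
    simp only [scalar_T_T]
    have hne : u ≠ v := by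
      intro he; subst he; omega
    rw [if_neg hne, mul_zero, add_zero]
    exact if_congr (mul_adj_cancel u v) rfl rfl
  · rw [T_mul_adj_down 𝒜 h u hu, T_mul_adj_up 𝒜 h v hv, scalar_add_left,
      scalar_smul_left]
    simp only [scalar_T_T]
    have hne : u ≠ v := by
      intro he; subst he; omega
    rw [if_neg hne, mul_zero, add_zero]
    exact if_congr (mul_adj_cancel u v) rfl rfl
  · rw [T_mul_adj_down 𝒜 h u hu, T_mul_adj_down 𝒜 h v hv, scalar_add_left,
      scalar_add_right, scalar_smul_left, scalar_smul_right]
    simp only [scalar_T_T]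
    rw [if_congr (mul_adj_cancel u v) rfl rfl]

lemma scalar_adj_T_T {i : ℕ} (h : i + 1 < n) (u v : Equiv.Perm (Fin n)) :
    𝒜.scalar (𝒜.T (adj n i) * 𝒜.T u) (𝒜.T v) =
      𝒜.scalar (𝒜.T u) (𝒜.T (adj n i) * 𝒜.T v) := by
  classical
  have hcancel : ∀ a b : Equiv.Perm (Fin n), adj n i * a = b ↔ a = adj n i * b := by
    intro a b
    constructor
    · rintro rfl; rw [← mul_assoc, adj_mul_self, one_mul]
    · rintro rfl; rw [← mul_assoc, adj_mul_self, one_mul]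
  rcases len_adj_mul u h with hu | hu <;> rcases len_adj_mul v h with hv | hv
  · rw [T_adj_mul_up 𝒜 h u hu, T_adj_mul_up 𝒜 h v hv]
    simp only [scalar_T_T]
    exact if_congr (hcancel u v) rfl rfl
  · rw [T_adj_mul_up 𝒜 h u hu, T_adj_mul_down 𝒜 h v hv, scalar_add_right,
      scalar_smul_right]
    simp only [scalar_T_T]
    have hne : u ≠ v := by
      intro he; subst he; omega
    rw [if_neg hne, mul_zero, add_zero]
    exact if_congr (hcancel u v) rfl rfl
  · rw [T_adj_mul_down 𝒜 h u hu, T_adj_mul_up 𝒜 h v hv, scalar_add_left,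
      scalar_smul_left]
    simp only [scalar_T_T]
    have hne : u ≠ v := by
      intro he; subst he; omega
    rw [if_neg hne, mul_zero, add_zero]
    exact if_congr (hcancel u v) rfl rfl
  · rw [T_adj_mul_down 𝒜 h u hu, T_adj_mul_down 𝒜 h v hv, scalar_add_left,
      scalar_add_right, scalar_smul_left, scalar_smul_right]
    simp only [scalar_T_T]
    rw [if_congr (hcancel u v) rfl rfl]

lemma scalar_mul_adj (x y : H) {i : ℕ} (h : i + 1 < n) :
    𝒜.scalar (x * 𝒜.T (adj n i)) y = 𝒜.scalar x (y * 𝒜.T (adj n i)) := by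
  rw [← Module.Basis.sum_equivFun 𝒜.basis x, ← Module.Basis.sum_equivFun 𝒜.basis y]
  simp only [Finset.sum_mul, smul_mul_assoc, scalar_sum_left, scalar_smul_left,
    scalar_sum_right, scalar_smul_right, 𝒜.basis_eq, scalar_T_adj_T 𝒜 h]

lemma scalar_adj_mul (x y : H) {i : ℕ} (h : i + 1 < n) :
    𝒜.scalar (𝒜.T (adj n i) * x) y = 𝒜.scalar x (𝒜.T (adj n i) * y) := by
  rw [← Module.Basis.sum_equivFun 𝒜.basis x, ← Module.Basis.sum_equivFun 𝒜.basis y]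
  simp only [Finset.mul_sum, mul_smul_comm, scalar_sum_left, scalar_smul_left,
    scalar_sum_right, scalar_smul_right, 𝒜.basis_eq, scalar_adj_T_T 𝒜 h]

lemma scalar_T_mul_left (u : Equiv.Perm (Fin n)) (x y : H) :
    𝒜.scalar (𝒜.T u * x) y = 𝒜.scalar x (𝒜.T u⁻¹ * y) := by
  suffices hgen : ∀ (m : ℕ) (u : Equiv.Perm (Fin n)) (x y : H), len u ≤ m →
      𝒜.scalar (𝒜.T u * x) y = 𝒜.scalar x (𝒜.T u⁻¹ * y) by
    exact hgen (len u) u x y le_rfl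
  intro m
  induction m with
  | zero =>
    intro u x y hlen
    have : u = 1 := eq_one_of_len_eq_zero (by omega)
    subst this
    rw [𝒜.T_one, inv_one, 𝒜.T_one, one_mul, one_mul]
  | succ m ih =>
  intro u x y hlen
  rcases eq_or_ne u 1 with rfl | hu
  · rw [𝒜.T_one, inv_one, 𝒜.T_one, one_mul, one_mul]
  · obtain ⟨i, h, hd⟩ := exists_descent u⁻¹ (by simpa using hu)
    rcases len_mul_adj u⁻¹ h with ⟨hcon, -⟩ | ⟨-, hlen⟩
    · exact absurd hd (asymm hcon)
    set u' : Equiv.Perm (Fin n) := adj n i * u with hu'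
    have hadjinv : (adj n i : Equiv.Perm (Fin n))⁻¹ = adj n i := adj_inv
    have hui : u'⁻¹ = u⁻¹ * adj n i := by rw [hu', mul_inv_rev, hadjinv]
    have hlu' : len u' = len u⁻¹ - 1 := by
      rw [← len_inv u', hui]; omega
    have hlu : len u' + 1 = len u := by
      rw [hlu', len_inv] at *; omega
    have hsu : adj n i * u' = u := by rw [hu', ← mul_assoc, adj_mul_self, one_mul]
    have hTu : 𝒜.T (adj n i) * 𝒜.T u' = 𝒜.T u := by
      rw [T_adj_mul_up 𝒜 h u' (by rw [hsu]; omega), hsu]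
    have hTuinv : 𝒜.T u'⁻¹ * 𝒜.T (adj n i) = 𝒜.T u⁻¹ := by
      have he : u'⁻¹ * adj n i = u⁻¹ := by rw [hui, mul_assoc, adj_mul_self, mul_one]
      have hlen2 : len (u'⁻¹ * adj n i) = len u'⁻¹ + 1 := by
        rw [he, len_inv, len_inv, ← hlu]
      rw [T_mul_adj_up 𝒜 h u'⁻¹ hlen2, he]
    calc 𝒜.scalar (𝒜.T u * x) y
        = 𝒜.scalar (𝒜.T (adj n i) * (𝒜.T u' * x)) y := by rw [← mul_assoc, hTu]
      _ = 𝒜.scalar (𝒜.T u' * x) (𝒜.T (adj n i) * y) := scalar_adj_mul 𝒜 _ _ h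
      _ = 𝒜.scalar x (𝒜.T u'⁻¹ * (𝒜.T (adj n i) * y)) := by
          exact ih u' x (𝒜.T (adj n i) * y) (by omega)
      _ = 𝒜.scalar x (𝒜.T u⁻¹ * y) := by rw [← mul_assoc, hTuinv]

end AdjointLemmas



section Triangular
variable {n : ℕ} {R : Type} [CommRing R] {q : Rˣ} {H : Type} [Ring H] [Algebra R H]
variable (𝒜 : HeckeAlgebra n R q H)

lemma span_repr_zero {s : Set (Equiv.Perm (Fin n))} {x : H}
    (hx : x ∈ Submodule.span R (𝒜.T '' s)) {ω : Equiv.Perm (Fin n)} (hω : ω ∉ s) :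
    𝒜.basis.repr x ω = 0 := by
  induction hx using Submodule.span_induction with
  | mem z hz =>
    obtain ⟨a, ha, rfl⟩ := hz
    rw [repr_T, Finsupp.single_apply, if_neg]
    exact fun he => hω (he ▸ ha)
  | zero => simp
  | add _ _ _ _ h1 h2 => simp [map_add, h1, h2]
  | smul c _ _ h1 => simp [map_smul, h1]

lemma YB_triangular {v' : Fin n → ℤ} {inv : ℤ → R} {Y : Equiv.Perm (Fin n) → H}
    (hY : IsYangBaxterFamily 𝒜 v' inv Y) (σ : Equiv.Perm (Fin n)) :
    Y σ - 𝒜.T σ ∈ Submodule.span R (𝒜.T '' {x | len x < len σ}) := by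
  suffices hgen : ∀ (m : ℕ) (σ : Equiv.Perm (Fin n)), len σ ≤ m →
      Y σ - 𝒜.T σ ∈ Submodule.span R (𝒜.T '' {x | len x < len σ}) by
    exact hgen (len σ) σ le_rfl
  intro m
  induction m with
  | zero =>
    intro σ hσ
    have : σ = 1 := eq_one_of_len_eq_zero (by omega)
    subst this
    rw [hY.1, 𝒜.T_one, sub_self]
    exact Submodule.zero_mem _
  | succ m ih =>
  intro σ hσ
  rcases eq_or_ne σ 1 with rfl | hσ1
  · rw [hY.1, 𝒜.T_one, sub_self]
    exact Submodule.zero_mem _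
  obtain ⟨i, h, hd⟩ := exists_descent σ hσ1
  rcases len_mul_adj σ h with ⟨hcon, -⟩ | ⟨-, hlen⟩
  · exact absurd hd (asymm hcon)
  set σ' : Equiv.Perm (Fin n) := σ * adj n i with hσ'
  have hss : σ' * adj n i = σ := by rw [hσ', mul_assoc, adj_mul_self, mul_one]
  have hup : len (σ' * adj n i) = len σ' + 1 := by rw [hss]; omega
  have hrec := hY.2 σ' i h hup
  rw [hss] at hrec
  set c : R := ((q ^ (v' (σ' ⟨i + 1, h⟩) - v' (σ' ⟨i, by omega⟩)) : Rˣ) : R) *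
      inv (v' (σ' ⟨i + 1, h⟩) - v' (σ' ⟨i, by omega⟩)) with hc
  set z : H := Y σ' - 𝒜.T σ' with hz
  have hzmem : z ∈ Submodule.span R (𝒜.T '' {x | len x < len σ'}) := ih σ' (by omega)
  have hYσ' : Y σ' = 𝒜.T σ' + z := by rw [hz, add_sub_cancel]
  have key : Y σ - 𝒜.T σ =
      z * (𝒜.T (adj n i) - algebraMap R H c) - c • 𝒜.T σ' := by
    rw [hrec, hYσ', add_mul, mul_sub (𝒜.T σ'), T_mul_adj_up 𝒜 h σ' hup, hss,
      mul_algebraMap']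
    abel
  rw [key]
  apply Submodule.sub_mem
  · -- z * (T adj - alg c) ∈ span
    have hmr : z * (𝒜.T (adj n i) - algebraMap R H c) =
        (LinearMap.mulRight R (𝒜.T (adj n i) - algebraMap R H c)) z := rfl
    rw [hmr]
    have h1 : (LinearMap.mulRight R (𝒜.T (adj n i) - algebraMap R H c)) z ∈
        Submodule.map (LinearMap.mulRight R (𝒜.T (adj n i) - algebraMap R H c))
          (Submodule.span R (𝒜.T '' {x | len x < len σ'})) :=
      Submodule.mem_map_of_mem hzmem
    rw [Submodule.map_span] at h1
    refine Submodule.span_le.2 ?_ h1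
    rintro y ⟨y', ⟨x', hx', rfl⟩, rfl⟩
    simp only [LinearMap.mulRight_apply]
    rw [mul_sub, mul_algebraMap']
    apply Submodule.sub_mem
    · rcases len_mul_adj x' h with ⟨-, hx2⟩ | ⟨-, hx2⟩
      · rw [T_mul_adj_up 𝒜 h x' hx2]
        apply Submodule.subset_span
        exact ⟨x' * adj n i, by simp only [Set.mem_setOf_eq] at hx' ⊢; omega, rfl⟩
      · rw [T_mul_adj_down 𝒜 h x' hx2]
        apply Submodule.add_mem
        · apply Submodule.subset_span
          exact ⟨x' * adj n i, by simp only [Set.mem_setOf_eq] at hx' ⊢; omega, rfl⟩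
        · apply Submodule.smul_mem
          apply Submodule.subset_span
          exact ⟨x', by simp only [Set.mem_setOf_eq] at hx' ⊢; omega, rfl⟩
    · apply Submodule.smul_mem
      apply Submodule.subset_span
      exact ⟨x', by simp only [Set.mem_setOf_eq] at hx' ⊢; omega, rfl⟩
  · apply Submodule.smul_mem
    apply Submodule.subset_span
    exact ⟨σ', by simp only [Set.mem_setOf_eq]; omega, rfl⟩

lemma YB_repr_rev {v' : Fin n → ℤ} {inv : ℤ → R} {Y : Equiv.Perm (Fin n) → H}
    (hY : IsYangBaxterFamily 𝒜 v' inv Y) (σ : Equiv.Perm (Fin n)) :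
    𝒜.basis.repr (Y σ) Fin.revPerm = if σ = Fin.revPerm then 1 else 0 := by
  classical
  have h1 := YB_triangular 𝒜 hY σ
  have h2 : 𝒜.basis.repr (Y σ - 𝒜.T σ) Fin.revPerm = 0 := by
    apply span_repr_zero 𝒜 h1
    intro hx
    simp only [Set.mem_setOf_eq] at hx
    have := len_le_revPerm (n := n) σ
    omega
  have h3 : 𝒜.basis.repr (Y σ) Fin.revPerm = 𝒜.basis.repr (𝒜.T σ) Fin.revPerm := by
    have := map_sub 𝒜.basis.repr (Y σ) (𝒜.T σ)
    have h4 := congrArg (fun f => f Fin.revPerm) this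
    simp only [Finsupp.sub_apply] at h4
    rw [h2] at h4
    exact sub_eq_zero.mp h4.symm
  rw [h3, repr_T, Finsupp.single_apply]

end Triangular



section MainAux
variable {n : ℕ} {R : Type} [CommRing R] {q : Rˣ} {H : Type} [Ring H] [Algebra R H]

lemma inv_neg_eq {inv : ℤ → R} (hinv : ∀ k : ℤ, k ≠ 0 → qint q k * inv k = 1)
    {k : ℤ} (hk : k ≠ 0) : inv (-k) = - inv k := by
  have h1 := hinv k hk
  have h2 := hinv (-k) (neg_ne_zero.2 hk)
  rw [qint_neg] at h2
  calc inv (-k) = inv (-k) * (qint q k * inv k) := by rw [h1, mul_one]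
    _ = (-(- qint q k * inv (-k))) * inv k := by ring
    _ = - inv k := by rw [h2]; ring

lemma C_sum {inv : ℤ → R} (hinv : ∀ k : ℤ, k ≠ 0 → qint q k * inv k = 1)
    {k : ℤ} (hk : k ≠ 0) :
    ((q ^ k : Rˣ) : R) * inv k + ((q ^ (-k) : Rˣ) : R) * inv (-k) = Qv R q := by
  have h1 := hinv k hk
  have hq := qv_mul_qint q k
  rw [inv_neg_eq hinv hk]
  calc ((q ^ k : Rˣ) : R) * inv k + ((q ^ (-k) : Rˣ) : R) * (- inv k)
      = (((q ^ k : Rˣ) : R) - ((q ^ (-k) : Rˣ) : R)) * inv k := by ring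
    _ = Qv R q * qint q k * inv k := by rw [hq]
    _ = Qv R q := by rw [mul_assoc, h1, mul_one]

variable (𝒜 : HeckeAlgebra n R q H)

lemma T_adj_quad {i : ℕ} (h : i + 1 < n) (c d : R) :
    (𝒜.T (adj n i) - algebraMap R H c) * (𝒜.T (adj n i) - algebraMap R H d) =
      (Qv R q - c - d) • 𝒜.T (adj n i) + (1 + c * d) • (1 : H) := by
  have e1 : algebraMap R H c * 𝒜.T (adj n i) = c • 𝒜.T (adj n i) := by
    rw [Algebra.algebraMap_eq_smul_one, smul_mul_assoc, one_mul]
  have e2 : algebraMap R H c * algebraMap R H d = (c * d) • (1 : H) := by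
    rw [← map_mul, Algebra.algebraMap_eq_smul_one]
  rw [sub_mul, mul_sub, mul_sub, 𝒜.T_sq i h, mul_algebraMap' (𝒜.T (adj n i)) d, e1, e2]
  module

lemma adj_apply_left {i : ℕ} (h : i + 1 < n) :
    adj n i ⟨i, by omega⟩ = (⟨i + 1, h⟩ : Fin n) := by
  rw [adj_eq h]; exact Equiv.swap_apply_left _ _

lemma adj_apply_right {i : ℕ} (h : i + 1 < n) :
    adj n i ⟨i + 1, h⟩ = (⟨i, by omega⟩ : Fin n) := by
  rw [adj_eq h]; exact Equiv.swap_apply_right _ _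

end MainAux


/-- Yang–Baxter duality: if `{Y_w^v}` is the Yang–Baxter basis
attached to a vector `v ∈ ℤⁿ` with pairwise distinct components,
`u = [v_n, …, v_1]`, and `Ŷ_w^v := T_ω · Y^u_{ω·w}` where `ω` is the
permutation of maximal length, then `(Y_w^v, Ŷ_{w'}^v) = δ_{w,w'}`. -/
theorem yangBaxter_duality {n : ℕ} {R : Type} [CommRing R] {q : Rˣ} {H : Type}
    [Ring H] [Algebra R H] (𝒜 : HeckeAlgebra n R q H)
    (v : Fin n → ℤ) (hv : Function.Injective v)
    (inv : ℤ → R) (hinv : ∀ k : ℤ, k ≠ 0 → qint q k * inv k = 1)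
    (Y Yu : Equiv.Perm (Fin n) → H)
    (hY : IsYangBaxterFamily 𝒜 v inv Y)
    (hYu : IsYangBaxterFamily 𝒜 (fun p => v p.rev) inv Yu) :
    ∀ w w' : Equiv.Perm (Fin n),
      𝒜.scalar (Y w) (𝒜.T Fin.revPerm * Yu (Fin.revPerm * w')) =
        if w = w' then 1 else 0 := by
  classical
  suffices hgen : ∀ (m : ℕ) (w w' : Equiv.Perm (Fin n)), len w ≤ m →
      𝒜.scalar (Y w) (𝒜.T Fin.revPerm * Yu (Fin.revPerm * w')) =
        if w = w' then 1 else 0 by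
    intro w w'
    exact hgen (len w) w w' le_rfl
  have base : ∀ w' : Equiv.Perm (Fin n),
      𝒜.scalar (Y 1) (𝒜.T Fin.revPerm * Yu (Fin.revPerm * w')) =
        if (1 : Equiv.Perm (Fin n)) = w' then 1 else 0 := by
    intro w'
    rw [hY.1, scalar_comm, scalar_T_mul_left, revPerm_inv, mul_one,
      scalar_T_right, YB_repr_rev 𝒜 hYu]
    have hiff : (Fin.revPerm * w' = Fin.revPerm) ↔ ((1 : Equiv.Perm (Fin n)) = w') := by
      rw [mul_eq_left]
      exact ⟨fun he => he.symm, fun he => he.symm⟩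
    exact if_congr hiff rfl rfl
  intro m
  induction m with
  | zero =>
    intro w w' hlen
    have hw : w = 1 := eq_one_of_len_eq_zero (by omega)
    subst hw
    exact base w'
  | succ m ih =>
  intro w w' hlen
  rcases eq_or_ne w 1 with rfl | hw1
  · exact base w'
  obtain ⟨i, h, hd⟩ := exists_descent w hw1
  rcases len_mul_adj w h with ⟨hcon, -⟩ | ⟨-, hlenw⟩
  · exact absurd hd (asymm hcon)
  set wt : Equiv.Perm (Fin n) := w * adj n i with hwt
  have hwts : wt * adj n i = w := by rw [hwt, mul_assoc, adj_mul_self, mul_one]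
  have hup : len (wt * adj n i) = len wt + 1 := by rw [hwts]; omega
  set k : ℤ := v (wt ⟨i + 1, h⟩) - v (wt ⟨i, by omega⟩) with hk
  set Ck : R := ((q ^ k : Rˣ) : R) * inv k with hCk
  have hYw : Y w = Y wt * (𝒜.T (adj n i) - algebraMap R H Ck) := by
    have := hY.2 wt i h hup
    rw [hwts] at this
    rw [this, ← hk, ← hCk]
  -- mover of the factor to the right argument
  have move : ∀ z : H, 𝒜.scalar (Y w) z =
      𝒜.scalar (Y wt) (z * (𝒜.T (adj n i) - algebraMap R H Ck)) := by
    intro z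
    rw [hYw, mul_sub, mul_algebraMap', scalar_sub_left, scalar_smul_left,
      scalar_mul_adj 𝒜 _ _ h, mul_sub z, mul_algebraMap', scalar_sub_right,
      scalar_smul_right]
  set k' : ℤ := v (w' ⟨i + 1, h⟩) - v (w' ⟨i, by omega⟩) with hk'
  set Ck' : R := ((q ^ k' : Rˣ) : R) * inv k' with hCk'
  set Cmk' : R := ((q ^ (-k') : Rˣ) : R) * inv (-k') with hCmk'
  have hwtw' : wt ≠ w' * adj n i → w ≠ w' := by
    intro hne he
    exact hne (by rw [hwt, he])
  have hwtw'2 : wt = w' * adj n i → w = w' := by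
    intro he
    rw [← hwts, he, mul_assoc, adj_mul_self, mul_one]
  have hCkk' : wt = w' → Ck = Ck' := by
    intro he
    rw [hCk, hCk', hk, hk', he]
  -- the two scalar products known by induction
  have ih1 : 𝒜.scalar (Y wt) (𝒜.T Fin.revPerm * Yu (Fin.revPerm * w')) =
      if wt = w' then 1 else 0 := ih wt w' (by omega)
  have ih2 : 𝒜.scalar (Y wt) (𝒜.T Fin.revPerm * Yu (Fin.revPerm * (w' * adj n i))) =
      if wt = w' * adj n i then 1 else 0 := ih wt (w' * adj n i) (by omega)
  have l1 := len_revPerm_mul (n := n) (w' * adj n i)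
  have l2 := len_revPerm_mul (n := n) w'
  rcases len_mul_adj w' h with ⟨-, hup'⟩ | ⟨-, hdown'⟩
  · -- Case A : w' ascends at i; then w ≠ w'
    have hwne : w ≠ w' := by
      intro he
      have h1 : wt = w' * adj n i := by rw [hwt, he]
      have h2 := congrArg len h1
      have h3 := congrArg len he
      omega
    have hk'ne : k' ≠ 0 := by
      rw [hk']
      apply sub_ne_zero_of_ne
      apply hv.ne
      apply w'.injective.ne
      simp [Fin.ext_iff]
    have hsum : Ck' + Cmk' = Qv R q := C_sum hinv hk'ne
    -- recursion for Yu at ω * (w' * adj n i)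
    have hcond : len ((Fin.revPerm * (w' * adj n i)) * adj n i) =
        len (Fin.revPerm * (w' * adj n i)) + 1 := by
      have he : (Fin.revPerm * (w' * adj n i)) * adj n i = Fin.revPerm * w' := by
        rw [mul_assoc, mul_assoc, adj_mul_self, mul_one]
      rw [he]
      omega
    have hYu2 := hYu.2 (Fin.revPerm * (w' * adj n i)) i h hcond
    simp only [Equiv.Perm.mul_apply, Fin.revPerm_apply, Fin.rev_rev,
      adj_apply_right h, adj_apply_left h] at hYu2
    rw [show (Fin.revPerm * (w' * adj n i)) * adj n i = Fin.revPerm * w' by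
      rw [mul_assoc, mul_assoc, adj_mul_self, mul_one]] at hYu2
    rw [show v (w' ⟨i, by omega⟩) - v (w' ⟨i + 1, h⟩) = -k' by rw [hk']; ring] at hYu2
    rw [← hCmk'] at hYu2
    -- hYu2 : Yu (ω * w') = Yu (ω * (w' * adj n i)) * (T adj - algebraMap Cmk')
    have hYhat : 𝒜.T Fin.revPerm * Yu (Fin.revPerm * w') =
        (𝒜.T Fin.revPerm * Yu (Fin.revPerm * (w' * adj n i))) *
          (𝒜.T (adj n i) - algebraMap R H Cmk') := by
      rw [hYu2, mul_assoc]
    have hAT : (𝒜.T Fin.revPerm * Yu (Fin.revPerm * (w' * adj n i))) * 𝒜.T (adj n i) =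
        𝒜.T Fin.revPerm * Yu (Fin.revPerm * w') +
          Cmk' • (𝒜.T Fin.revPerm * Yu (Fin.revPerm * (w' * adj n i))) := by
      rw [hYhat, mul_sub, mul_algebraMap']
      abel
    have expand : (𝒜.T Fin.revPerm * Yu (Fin.revPerm * w')) *
        (𝒜.T (adj n i) - algebraMap R H Ck) =
        (Ck' - Ck) • (𝒜.T Fin.revPerm * Yu (Fin.revPerm * w')) +
          (1 + Ck' * Cmk') • (𝒜.T Fin.revPerm * Yu (Fin.revPerm * (w' * adj n i))) := by
      have hco : Qv R q - Cmk' - Ck = Ck' - Ck := by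
        rw [← hsum]; ring
      conv_lhs => rw [hYhat]
      rw [mul_assoc, T_adj_quad 𝒜 h, hco, mul_add, mul_smul_comm, mul_smul_comm,
        mul_one, hAT]
      module
    rw [move, expand, scalar_add_right, scalar_smul_right, scalar_smul_right,
      ih1, ih2, if_neg hwne]
    have hne2 : wt ≠ w' * adj n i := by
      intro he
      exact hwne (hwtw'2 he)
    rw [if_neg hne2, mul_zero, add_zero]
    rcases eq_or_ne wt w' with he | he
    · rw [if_pos he, mul_one, hCkk' he, sub_self]
    · rw [if_neg he, mul_zero]
  · -- Case B : w' descends at i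
    have hcond : len ((Fin.revPerm * w') * adj n i) = len (Fin.revPerm * w') + 1 := by
      have he : (Fin.revPerm * w') * adj n i = Fin.revPerm * (w' * adj n i) := by
        rw [mul_assoc]
      rw [he]
      omega
    have hYu2 := hYu.2 (Fin.revPerm * w') i h hcond
    simp only [Equiv.Perm.mul_apply, Fin.revPerm_apply, Fin.rev_rev] at hYu2
    rw [show (Fin.revPerm * w') * adj n i = Fin.revPerm * (w' * adj n i) by
      rw [mul_assoc]] at hYu2
    rw [← hk', ← hCk'] at hYu2
    -- hYu2 : Yu (ω * (w' * adj n i)) = Yu (ω * w') * (T adj - algebraMap Ck')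
    have hA' : 𝒜.T Fin.revPerm * Yu (Fin.revPerm * (w' * adj n i)) =
        (𝒜.T Fin.revPerm * Yu (Fin.revPerm * w')) *
          (𝒜.T (adj n i) - algebraMap R H Ck') := by
      rw [hYu2, mul_assoc]
    have expand : (𝒜.T Fin.revPerm * Yu (Fin.revPerm * w')) *
        (𝒜.T (adj n i) - algebraMap R H Ck) =
        (𝒜.T Fin.revPerm * Yu (Fin.revPerm * (w' * adj n i))) +
          (Ck' - Ck) • (𝒜.T Fin.revPerm * Yu (Fin.revPerm * w')) := by
      rw [hA', mul_sub, mul_sub, mul_algebraMap', mul_algebraMap']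
      module
    rw [move, expand, scalar_add_right, scalar_smul_right, ih1, ih2]
    rcases eq_or_ne w w' with he | he
    · have hpos : wt = w' * adj n i := by rw [hwt, he]
      have hne3 : wt ≠ w' := by
        intro he2
        rw [← he] at he2
        have := congrArg len he2
        omega
      rw [if_pos hpos, if_neg hne3, mul_zero, add_zero, if_pos he]
    · have hne4 : wt ≠ w' * adj n i := fun hc => he (hwtw'2 hc)
      rw [if_neg hne4, if_neg he]
      rcases eq_or_ne wt w' with he2 | he2
      · rw [if_pos he2, mul_one, hCkk' he2, sub_self, zero_add]
      · rw [if_neg he2, mul_zero, zero_add]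

end
end HeckePaper
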